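/- Let A ∈ ℝ^{n×n}, B ∈ ℝ^{n×m}, K ∈ ℝ^{m×n}, and let Q ∈ ℝ^{n×n}, R ∈ ℝ^{m×m}, P ∈ ℝ^{n×n} be symmetric positive semidefinite. Let X_f ⊆ ℝ^n satisfy: for every x ∈ X_f, (A+BK)x ∈ X_f and ‖(A+BK)x‖²_P − ‖x‖²_P + ‖x‖²_Q + ‖Kx‖²_R ≤ 0. Given inputs u_0,…,u_{N−1} ∈ ℝ^m with states x_0,…,x_N defined by x_{k+1} = A x_k + B u_k and x_N ∈ X_f, define J(x_0, u) = ∑_{k=0}^{N−1}(‖x_k‖²_Q + ‖u_k‖²_R) + ‖x_N‖²_P, and let û = (u_1,…,u_{N−1}, K x_N) be the shifted candidate starting at x_1. Then J(x_1, û) ≤ J(x_0, u) − ‖x_0‖²_Q − ‖u_0‖²_R. -/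

import Mathlib

open Matrix

/-- State trajectory of the discrete-time linear system `x(k+1) = A x(k) + B u(k)`. -/
def traj {n m : ℕ} (A : Matrix (Fin n) (Fin n) ℝ) (B : Matrix (Fin n) (Fin m) ℝ)
    (x0 : Fin n → ℝ) (u : ℕ → Fin m → ℝ) : ℕ → Fin n → ℝ
  | 0 => x0
  | k + 1 => A.mulVec (traj A B x0 u k) + B.mulVec (u k)

/-- Quadratic form `‖x‖²_P = xᵀ P x`. -/
def quadForm {d : ℕ} (P : Matrix (Fin d) (Fin d) ℝ) (x : Fin d → ℝ) : ℝ :=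
  dotProduct x (P.mulVec x)

/-- The MPC cost of horizon `N` starting at `x0` under inputs `u`. -/
def mpcCost {n m : ℕ} (A : Matrix (Fin n) (Fin n) ℝ) (B : Matrix (Fin n) (Fin m) ℝ)
    (Q : Matrix (Fin n) (Fin n) ℝ) (R : Matrix (Fin m) (Fin m) ℝ)
    (P : Matrix (Fin n) (Fin n) ℝ) (N : ℕ) (x0 : Fin n → ℝ) (u : ℕ → Fin m → ℝ) : ℝ :=
  (∑ k ∈ Finset.range N, (quadForm Q (traj A B x0 u k) + quadForm R (u k))) +
    quadForm P (traj A B x0 u N)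

/-- Cost decrease along the shifted candidate: under the standard terminal Lyapunov
condition on `X_f`, the shifted input sequence `(u_1, …, u_{N-1}, K x_N)` starting at
`x_1 = A x_0 + B u_0` satisfies `J(x_1, û) ≤ J(x_0, u) - ‖x_0‖²_Q - ‖u_0‖²_R`. -/
theorem shifted_cost_decrease {n m N : ℕ} (hN : 1 ≤ N)
    (A : Matrix (Fin n) (Fin n) ℝ) (B : Matrix (Fin n) (Fin m) ℝ)
    (K : Matrix (Fin m) (Fin n) ℝ)
    (Q P : Matrix (Fin n) (Fin n) ℝ) (R : Matrix (Fin m) (Fin m) ℝ)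
    (hQ : Q.PosSemidef) (hR : R.PosSemidef) (hP : P.PosSemidef)
    (Xf : Set (Fin n → ℝ))
    (hXf : ∀ x ∈ Xf, (A.mulVec x + B.mulVec (K.mulVec x)) ∈ Xf ∧
      quadForm P (A.mulVec x + B.mulVec (K.mulVec x)) - quadForm P x +
        quadForm Q x + quadForm R (K.mulVec x) ≤ 0)
    (x0 : Fin n → ℝ) (u : ℕ → Fin m → ℝ)
    (hterm : traj A B x0 u N ∈ Xf) :
    mpcCost A B Q R P N (traj A B x0 u 1)
        (fun k => if k + 1 < N then u (k + 1) else K.mulVec (traj A B x0 u N)) ≤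
      mpcCost A B Q R P N x0 u - quadForm Q x0 - quadForm R (u 0) := by
  obtain ⟨M, rfl⟩ := Nat.exists_eq_succ_of_ne_zero (by omega : N ≠ 0)
  set xN := traj A B x0 u (M + 1) with hxN
  set uh : ℕ → Fin m → ℝ :=
    fun k => if k + 1 < M + 1 then u (k + 1) else K.mulVec xN with huh
  have huhlt : ∀ k, k < M → uh k = u (k + 1) := by
    intro k hk
    simp only [huh]
    rw [if_pos (by omega)]
  have huhM : uh M = K.mulVec xN := by
    simp only [huh]
    rw [if_neg (by omega)]
  have hstep : ∀ k, k ≤ M → traj A B (traj A B x0 u 1) uh k = traj A B x0 u (k + 1) := by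
    intro k
    induction k with
    | zero => intro _; rfl
    | succ j ih =>
      intro hj
      show A.mulVec (traj A B (traj A B x0 u 1) uh j) + B.mulVec (uh j) = _
      rw [ih (by omega), huhlt j (by omega)]
      rfl
  have hlast : traj A B (traj A B x0 u 1) uh (M + 1)
      = A.mulVec xN + B.mulVec (K.mulVec xN) := by
    show A.mulVec (traj A B (traj A B x0 u 1) uh M) + B.mulVec (uh M) = _
    rw [hstep M le_rfl, huhM]
  have hterm' := (hXf xN hterm).2
  unfold mpcCost
  rw [Finset.sum_range_succ, Finset.sum_range_succ']
  have hsum : ∑ k ∈ Finset.range M,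
        (quadForm Q (traj A B (traj A B x0 u 1) uh k) + quadForm R (uh k))
      = ∑ k ∈ Finset.range M,
        (quadForm Q (traj A B x0 u (k + 1)) + quadForm R (u (k + 1))) := by
    apply Finset.sum_congr rfl
    intro k hk
    rw [hstep k (le_of_lt (Finset.mem_range.mp hk)), huhlt k (Finset.mem_range.mp hk)]
  rw [hsum, hstep M le_rfl, hlast, huhM]
  have e1 : quadForm Q (traj A B x0 u (M + 1)) = quadForm Q xN := rfl
  have e2 : quadForm P (traj A B x0 u M.succ) = quadForm P xN := rfl
  have e3 : quadForm Q (traj A B x0 u 0) = quadForm Q x0 := rfl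
  linarith [hterm', e1, e2, e3]
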